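/- Let d ≥ 1, ν ∈ (0, 1/d), α > 0, θ ∈ ℝ^d, and q ∈ Δ^d_ν. Let u be the (unique) minimizer over z ∈ Δ^d_ν of the strictly convex function F(z) := θᵀ z + α·Σ_{i=1}^d z_i log(z_i/q_i). Then there exists Λ > 0 such that u_i = max{ Λ·q_i·exp(−θ_i/α), ν } for all i ∈ [d]. -/

import Mathlib

open Set Filter

/-- Characterization of the KL-prox step on the truncated simplex:
if `u` minimizes `z ↦ θᵀz + α·Σᵢ zᵢ log(zᵢ/qᵢ)` over `Δ^d_ν`, then there exists `Λ > 0`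
with `uᵢ = max{Λ·qᵢ·exp(−θᵢ/α), ν}` for all `i`. -/
theorem stmt9 {d : ℕ} (hd : 1 ≤ d) (ν : ℝ) (hν : 0 < ν) (hν' : ν < 1 / d)
    (α : ℝ) (hα : 0 < α) (θ : Fin d → ℝ) (q : Fin d → ℝ)
    (hq : (∀ i, ν ≤ q i) ∧ ∑ i, q i = 1)
    (u : Fin d → ℝ) (hu : (∀ i, ν ≤ u i) ∧ ∑ i, u i = 1)
    (hmin : ∀ z : Fin d → ℝ, ((∀ i, ν ≤ z i) ∧ ∑ i, z i = 1) →
      (∑ i, θ i * u i) + α * ∑ i, u i * Real.log (u i / q i)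
        ≤ (∑ i, θ i * z i) + α * ∑ i, z i * Real.log (z i / q i)) :
    ∃ Λ : ℝ, 0 < Λ ∧ ∀ i, u i = max (Λ * q i * Real.exp (-θ i / α)) ν := by
  classical
  obtain ⟨hqν, hqs⟩ := hq
  obtain ⟨huν, hus⟩ := hu
  have hupos : ∀ k, 0 < u k := fun k => lt_of_lt_of_le hν (huν k)
  have hqpos : ∀ k, 0 < q k := fun k => lt_of_lt_of_le hν (hqν k)
  set φ : Fin d → ℝ := fun k => θ k + α * Real.log (u k / q k) with hφ
  -- key first-order optimality fact
  have key : ∀ i j : Fin d, ν < u i → φ i ≤ φ j := by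
    intro i j hui
    rcases eq_or_ne i j with rfl | hij
    · exact le_refl _
    set δ := u i - ν with hδdef
    have hδpos : 0 < δ := sub_pos.mpr hui
    set c : Fin d → ℝ := fun k => (if k = j then (1:ℝ) else 0) - (if k = i then 1 else 0)
      with hc
    have sumc : ∀ g : Fin d → ℝ, ∑ k, g k * c k = g j - g i := by
      intro g
      simp [hc, mul_sub, mul_ite, mul_zero, mul_one, Finset.sum_sub_distrib,
        Finset.sum_ite_eq']
    have hci : c i = -1 := by simp [hc, hij]
    have hcj : c j = 1 := by simp [hc, hij.symm]
    set Z : ℝ → Fin d → ℝ := fun ε k => u k + ε * c k with hZ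
    have hfeas : ∀ ε ∈ Set.Icc (0:ℝ) δ, (∀ k, ν ≤ Z ε k) ∧ ∑ k, Z ε k = 1 := by
      intro ε hε
      constructor
      · intro k
        by_cases hk : k = i
        · simp only [hZ, hk, hci]
          have := hε.2
          simp only [hδdef] at this
          nlinarith [hε.1]
        · by_cases hk' : k = j
          · simp only [hZ, hk', hcj]
            nlinarith [huν j, hε.1]
          · simp only [hZ, hc, if_neg hk, if_neg hk', sub_self, mul_zero, add_zero]
            exact huν k
      · have hsc : ∑ k, c k = 0 := by
          have := sumc (fun _ => (1:ℝ))
          simpa using this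
        simp only [hZ]
        rw [Finset.sum_add_distrib, ← Finset.mul_sum, hsc, mul_zero, add_zero, hus]
    set G : ℝ → ℝ := fun ε =>
      (∑ k, θ k * Z ε k) + α * ∑ k, Z ε k * Real.log (Z ε k / q k) with hG
    have hZ0 : ∀ k, Z 0 k = u k := by intro k; simp [hZ]
    have hmin' : IsMinOn G (Set.Icc (0:ℝ) δ) 0 := by
      rw [isMinOn_iff]
      intro ε hε
      have h1 := hmin (Z ε) (hfeas ε hε)
      simpa [hG, hZ0] using h1
    -- derivative of G at 0
    have hA : HasDerivAt (fun ε => ∑ k, θ k * Z ε k) (∑ k, θ k * c k) 0 := by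
      apply HasDerivAt.fun_sum
      intro k _
      have h1 : HasDerivAt (fun ε : ℝ => u k + ε * c k) (c k) 0 := by
        simpa using ((hasDerivAt_id (0:ℝ)).mul_const (c k)).const_add (u k)
      exact h1.const_mul (θ k)
    have hB : HasDerivAt (fun ε => ∑ k, Z ε k * Real.log (Z ε k / q k))
        (∑ k, (Real.log (u k / q k) + 1) * c k) 0 := by
      apply HasDerivAt.fun_sum
      intro k _
      have hf : HasDerivAt (fun ε : ℝ => u k + ε * c k) (c k) 0 := by
        simpa using ((hasDerivAt_id (0:ℝ)).mul_const (c k)).const_add (u k)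
      have h0 : HasDerivAt (fun x : ℝ => x * Real.log x - x * Real.log (q k))
          (Real.log (u k) + 1 - 1 * Real.log (q k)) (u k) :=
        (Real.hasDerivAt_mul_log (hupos k).ne').sub
          ((hasDerivAt_id (u k)).mul_const (Real.log (q k)))
      have heq : (fun x : ℝ => x * Real.log (x / q k)) =ᶠ[nhds (u k)]
          (fun x : ℝ => x * Real.log x - x * Real.log (q k)) := by
        filter_upwards [eventually_gt_nhds (hupos k)] with x hx
        rw [Real.log_div hx.ne' (hqpos k).ne', mul_sub]
      have hψ : HasDerivAt (fun x : ℝ => x * Real.log (x / q k))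
          (Real.log (u k / q k) + 1) (u k) := by
        have h1 := h0.congr_of_eventuallyEq heq
        have : Real.log (u k / q k) + 1 = Real.log (u k) + 1 - 1 * Real.log (q k) := by
          rw [Real.log_div (hupos k).ne' (hqpos k).ne']; ring
        rw [this]
        exact h1
      have hf0 : (fun ε : ℝ => u k + ε * c k) 0 = u k := by simp
      have hcomp := HasDerivAt.comp (0:ℝ) (hf0 ▸ hψ) hf
      simpa [hZ, Function.comp_def] using hcomp
    have hGd : HasDerivAt G
        ((∑ k, θ k * c k) + α * ∑ k, (Real.log (u k / q k) + 1) * c k) 0 :=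
      hA.add (hB.const_mul α)
    have hcone : δ ∈ posTangentConeAt (Set.Icc (0:ℝ) δ) 0 := by
      apply mem_posTangentConeAt_of_segment_subset
      rw [zero_add, segment_eq_Icc hδpos.le]
    have hnonneg := hmin'.localize.hasFDerivWithinAt_nonneg
      hGd.hasDerivWithinAt.hasFDerivWithinAt hcone
    have hD : 0 ≤ δ * ((∑ k, θ k * c k) + α * ∑ k, (Real.log (u k / q k) + 1) * c k) := by
      simpa [smul_eq_mul] using hnonneg
    have hD' : 0 ≤ (∑ k, θ k * c k) + α * ∑ k, (Real.log (u k / q k) + 1) * c k := by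
      nlinarith
    rw [sumc θ, sumc (fun k => Real.log (u k / q k) + 1)] at hD'
    simp only [hφ]
    nlinarith
  -- there is a coordinate strictly above ν
  have hex : ∃ i₀, ν < u i₀ := by
    by_contra h
    push_neg at h
    have hall : ∀ i, u i = ν := fun i => le_antisymm (h i) (huν i)
    have hsum : (1:ℝ) = d * ν := by
      rw [← hus]
      simp [hall, Finset.sum_const, Finset.card_univ, mul_comm]
    have hdpos : (0:ℝ) < d := by
      have : (1:ℕ) ≤ d := hd
      exact_mod_cast Nat.lt_of_lt_of_le Nat.zero_lt_one this
    have : ν * d < 1 := (lt_div_iff₀ hdpos).mp hν'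
    nlinarith
  obtain ⟨i₀, hi₀⟩ := hex
  set lam := φ i₀ with hlam
  refine ⟨Real.exp (lam / α), Real.exp_pos _, ?_⟩
  intro i
  have hΛval : Real.exp (lam / α) * q i * Real.exp (-θ i / α)
      = q i * Real.exp ((lam - θ i) / α) := by
    rw [mul_comm (Real.exp (lam / α)) (q i), mul_assoc, ← Real.exp_add]
    congr 1
    ring
  have hge : lam ≤ φ i := key i₀ i hi₀
  rcases lt_or_eq_of_le (huν i) with hui | hui
  · -- interior: u i > ν, φ i = lam
    have hle : φ i ≤ lam := key i i₀ hui
    have heq : φ i = lam := le_antisymm hle hge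
    have hlog : Real.log (u i / q i) = (lam - θ i) / α := by
      simp only [hφ] at heq
      field_simp
      linarith
    have hval : u i = q i * Real.exp ((lam - θ i) / α) := by
      rw [← hlog, Real.exp_log (div_pos (hupos i) (hqpos i)), mul_comm,
        div_mul_cancel₀ _ (hqpos i).ne']
    rw [hΛval, ← hval, max_eq_left hui.le]
  · -- boundary: u i = ν
    have hlog : (lam - θ i) / α ≤ Real.log (u i / q i) := by
      simp only [hφ] at hge
      rw [div_le_iff₀ hα]
      nlinarith
    have hexp : Real.exp ((lam - θ i) / α) ≤ u i / q i := by
      calc Real.exp ((lam - θ i) / α) ≤ Real.exp (Real.log (u i / q i)) :=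
            Real.exp_le_exp.mpr hlog
        _ = u i / q i := Real.exp_log (div_pos (hupos i) (hqpos i))
    have : q i * Real.exp ((lam - θ i) / α) ≤ u i := by
      rw [le_div_iff₀ (hqpos i)] at hexp
      linarith [hexp]
    rw [hΛval, ← hui, max_eq_right]
    linarith
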